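/- Let ℓ : ℝ^n → ℝ be differentiable, θ₀ ∈ ℝ^n, ρ > 0, and let g₁, …, g_m ∈ ℝ^n be nonzero vectors. Define Θ : (0, ∞) → ℝ^n by Θ(C) = θ₀ − (ρ/m)·Σ_{i=1}^m g_i / max(1, ‖g_i‖₂/C). Then for every C > 0 with C ≠ ‖g_i‖₂ for all i, the function C ↦ ℓ(Θ(C)) is differentiable at C with derivative d/dC ℓ(Θ(C)) = −ρ·⟨∇ℓ(Θ(C)), (1/m)·Σ_{i : ‖g_i‖₂ > C} g_i/‖g_i‖₂⟩. -/

import Mathlib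

open RealInnerProductSpace

/-- Chain-rule derivative of the post-update cost w.r.t. the clipping
threshold (Equations 8–12 of the paper): with
`Θ(C) = θ₀ − (ρ/m)·Σᵢ gᵢ/max(1, ‖gᵢ‖₂/C)`, at every `C > 0` avoiding the
norms `‖gᵢ‖₂`, the map `C ↦ ℓ(Θ(C))` is differentiable with derivative
`−ρ·⟨∇ℓ(Θ(C)), (1/m)·Σ_{i : ‖gᵢ‖₂ > C} gᵢ/‖gᵢ‖₂⟩`. -/
theorem stmt8 (n m : ℕ) (ℓ : EuclideanSpace ℝ (Fin n) → ℝ)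
    (hℓ : Differentiable ℝ ℓ) (θ₀ : EuclideanSpace ℝ (Fin n))
    (ρ : ℝ) (hρ : 0 < ρ) (g : Fin m → EuclideanSpace ℝ (Fin n))
    (hg : ∀ i, g i ≠ 0)
    (Θ : ℝ → EuclideanSpace ℝ (Fin n))
    (hΘ : ∀ C, Θ C = θ₀ - (ρ / m) • ∑ i, (max 1 (‖g i‖ / C))⁻¹ • g i)
    (C : ℝ) (hC : 0 < C) (hCne : ∀ i, C ≠ ‖g i‖) :
    HasDerivAt (fun C => ℓ (Θ C))
      (-ρ * ⟪gradient ℓ (Θ C),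
        (m : ℝ)⁻¹ • ∑ i ∈ Finset.univ.filter (fun i => C < ‖g i‖),
          ‖g i‖⁻¹ • g i⟫) C := by
  classical
  have hterm : ∀ i : Fin m, HasDerivAt (fun x : ℝ => (max 1 (‖g i‖ / x))⁻¹ • g i)
      (if C < ‖g i‖ then ‖g i‖⁻¹ • g i else 0) C := by
    intro i
    have hgi : (0:ℝ) < ‖g i‖ := norm_pos_iff.mpr (hg i)
    rcases lt_or_gt_of_ne (hCne i) with hlt | hgt
    · rw [if_pos hlt]
      have hd : HasDerivAt (fun x : ℝ => (x * ‖g i‖⁻¹) • g i) (‖g i‖⁻¹ • g i) C := by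
        have h1 : HasDerivAt (fun x : ℝ => x * ‖g i‖⁻¹) (‖g i‖⁻¹) C := by
          simpa using (hasDerivAt_id C).mul_const (‖g i‖⁻¹)
        simpa using h1.smul_const (g i)
      refine hd.congr_of_eventuallyEq ?_
      have hmem : {x : ℝ | 0 < x ∧ x < ‖g i‖} ∈ nhds C := by
        refine IsOpen.mem_nhds ?_ ⟨hC, hlt⟩
        exact (isOpen_lt continuous_const continuous_id).inter
          (isOpen_lt continuous_id continuous_const)
      filter_upwards [hmem] with x hx
      have h1 : (1:ℝ) ≤ ‖g i‖ / x := (one_le_div hx.1).mpr hx.2.le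
      rw [max_eq_right h1]
      congr 1
      field_simp
    · rw [if_neg (not_lt.mpr hgt.le)]
      have hd : HasDerivAt (fun _ : ℝ => g i) (0 : EuclideanSpace ℝ (Fin n)) C :=
        hasDerivAt_const _ _
      refine hd.congr_of_eventuallyEq ?_
      have hmem : {x : ℝ | ‖g i‖ < x} ∈ nhds C :=
        IsOpen.mem_nhds (isOpen_lt continuous_const continuous_id) hgt
      filter_upwards [hmem] with x hx
      have h1 : ‖g i‖ / x < 1 := (div_lt_one (hgi.trans hx)).mpr hx
      rw [max_eq_left h1.le, inv_one, one_smul]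
  have hsum : HasDerivAt (fun x : ℝ => ∑ i, (max 1 (‖g i‖ / x))⁻¹ • g i)
      (∑ i ∈ Finset.univ.filter (fun i => C < ‖g i‖), ‖g i‖⁻¹ • g i) C := by
    rw [Finset.sum_filter]
    exact HasDerivAt.fun_sum (fun i _ => hterm i)
  set S := ∑ i ∈ Finset.univ.filter (fun i => C < ‖g i‖), ‖g i‖⁻¹ • g i with hS
  have hΘ' : HasDerivAt Θ (-((ρ / m) • S)) C := by
    have : HasDerivAt (fun x => θ₀ - (ρ / m) • ∑ i, (max 1 (‖g i‖ / x))⁻¹ • g i)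
        (-((ρ / m) • S)) C := (hsum.const_smul (ρ / m)).const_sub θ₀
    exact this.congr_of_eventuallyEq (Filter.Eventually.of_forall fun x => hΘ x)
  have hgrad : HasGradientAt ℓ (gradient ℓ (Θ C)) (Θ C) :=
    (hℓ (Θ C)).hasGradientAt
  have hcomp := hgrad.hasFDerivAt.comp_hasDerivAt C hΘ'
  convert hcomp using 1
  · rfl
  · rfl
  · rfl
  rw [InnerProductSpace.toDual_apply_apply]
  rw [inner_smul_right, inner_neg_right, inner_smul_right]
  push_cast
  ring
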